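/- Set Y0 = (m−1)/2 and X(P2) = (m−1)/(2α(mN−N+2)). Then: (i) β/α < Y0, i.e. −Y0 < −β/α; and (ii) for all real numbers Y < −Y0, X ∈ [0, X(P2)] and Z ≥ 0, one has −Y² − (β/α)Y + X(1 − NY) − Z < 0. In particular, the half-space {Y < −(m−1)/2} is positively invariant for the system (PSsyst1) in the region {0 ≤ X ≤ X(P2), Z ≥ 0}. -/
import Mathlib


open Real Filter Set Topology

noncomputable def alphaC (m p σ : ℝ) : ℝ := (σ + 2) / (σ * (m - 1) + 2 * (p - 1))

noncomputable def betaC (m p σ : ℝ) : ℝ := (m - p) / (σ * (m - 1) + 2 * (p - 1))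

set_option maxHeartbeats 1000000 in
theorem plane_of_no_return (m p σ : ℝ) (N : ℕ) (hm : 1 < m) (hp0 : 0 < p) (hp1 : p < 1)
    (hσ : 2 * (1 - p) / (m - 1) < σ) (hN : 1 ≤ N) :
    betaC m p σ / alphaC m p σ < (m - 1) / 2 ∧
    (∀ X Y Z : ℝ, Y < -((m - 1) / 2) → 0 ≤ X →
      X ≤ (m - 1) / (2 * alphaC m p σ * (m * (N : ℝ) - (N : ℝ) + 2)) → 0 ≤ Z →
      -Y ^ 2 - betaC m p σ / alphaC m p σ * Y + X * (1 - (N : ℝ) * Y) - Z < 0) := by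
  have hm1 : (0:ℝ) < m - 1 := by linarith
  have hL : 0 < σ * (m - 1) + 2 * (p - 1) := by
    have h := (div_lt_iff₀ hm1).mp hσ
    nlinarith
  have hσ2 : (0:ℝ) < σ + 2 := by
    have hσ0 : 0 < σ := by
      by_contra h
      push_neg at h
      nlinarith [mul_nonneg (neg_nonneg.mpr h) hm1.le]
    linarith
  have hb : betaC m p σ / alphaC m p σ = (m - p) / (σ + 2) := by
    unfold betaC alphaC
    rw [div_div_div_eq]; rw [div_eq_div_iff (by positivity) (by positivity)]; ring
  have hbY0 : (m - p) / (σ + 2) < (m - 1) / 2 := by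
    rw [div_lt_div_iff₀ hσ2 (by norm_num : (0:ℝ) < 2)]
    nlinarith
  refine ⟨by rw [hb]; exact hbY0, ?_⟩
  intro X Y Z hY hX0 hX2 hZ
  rw [hb]
  set Nr : ℝ := (N : ℝ) with hNr
  have hN1 : (1:ℝ) ≤ Nr := by rw [hNr]; exact_mod_cast hN
  have hD : 0 < m * Nr - Nr + 2 := by nlinarith
  have hαpos : 0 < alphaC m p σ := div_pos hσ2 hL
  have hden : 0 < 2 * alphaC m p σ * (m * Nr - Nr + 2) := by positivity
  have hX2' : X * (2 * alphaC m p σ * (m * Nr - Nr + 2)) ≤ m - 1 :=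
    (le_div_iff₀ hden).mp hX2
  have hαL : alphaC m p σ * (σ * (m - 1) + 2 * (p - 1)) = σ + 2 :=
    div_mul_cancel₀ _ hL.ne'
  have h5 : X * (2 * (σ + 2) * (m * Nr - Nr + 2)) ≤
      (m - 1) * (σ * (m - 1) + 2 * (p - 1)) := by
    calc X * (2 * (σ + 2) * (m * Nr - Nr + 2))
        = X * (2 * (alphaC m p σ * (σ * (m - 1) + 2 * (p - 1))) * (m * Nr - Nr + 2)) := by
          rw [hαL]
      _ = X * (2 * alphaC m p σ * (m * Nr - Nr + 2)) * (σ * (m - 1) + 2 * (p - 1)) := by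
          ring
      _ ≤ (m - 1) * (σ * (m - 1) + 2 * (p - 1)) :=
          mul_le_mul_of_nonneg_right hX2' hL.le
  set b : ℝ := (m - p) / (σ + 2) with hbdef
  have hbσ : b * (σ + 2) = m - p := div_mul_cancel₀ _ hσ2.ne'
  -- key3 : g(-Y0) ≤ 0 for X ≤ X(P2), where Y0 = (m-1)/2
  have key3 : X + (b + Nr * X) * ((m - 1) / 2) ≤ ((m - 1) / 2) ^ 2 := by
    have e : (X + (b + Nr * X) * ((m - 1) / 2) - ((m - 1) / 2) ^ 2) * (4 * (σ + 2))
        = X * (2 * (σ + 2) * (m * Nr - Nr + 2))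
          - (m - 1) * (σ * (m - 1) + 2 * (p - 1))
          + (b * (σ + 2) - (m - p)) * (2 * (m - 1)) := by ring
    have h6 : (X + (b + Nr * X) * ((m - 1) / 2) - ((m - 1) / 2) ^ 2) * (4 * (σ + 2)) ≤ 0 := by
      rw [e, hbσ]; linarith
    nlinarith [h6, hσ2]
  have hbNX : b + Nr * X ≤ (m - 1) / 2 := by
    nlinarith [key3, hX0, hm1]
  have key2 : 0 < (m - 1) / 2 - Y - (b + Nr * X) := by linarith
  have keyprod : (Y + (m - 1) / 2) * ((m - 1) / 2 - Y - (b + Nr * X)) < 0 :=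
    mul_neg_of_neg_of_pos (by linarith) key2
  nlinarith [keyprod, key3, hZ]
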